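/- Let (X, d) be a complete CAT(0) metric space and let T : X → X be a semicontraction, i.e., d(Tx, Ty) ≤ d(x, y) for all x, y ∈ X. Then there exists A ≥ 0 (namely A = lim_{n→∞} (1/n) d(x, Tⁿx), which exists by subadditivity and is independent of x) such that for every starting point x₀ ∈ X there is a geodesic ray γ : [0, ∞) → X with γ(0) = x₀ and lim_{n→∞} (1/n) d( Tⁿ x₀, γ(A · n) ) = 0. -/

import Mathlib

open Filter Topology

set_option linter.unusedSectionVars false
set_option linter.unreachableTactic false
set_option linter.unusedTactic false
set_option maxHeartbeats 1000000



theorem KM.floor_tendsto {a : ℝ} (ha : 0 ≤ a) :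
    Tendsto (fun n : ℕ => (⌊a * 2^n⌋₊ : ℝ) / 2^n) atTop (𝓝 a) := by
  have key : ∀ n : ℕ, |(⌊a * 2^n⌋₊ : ℝ) / 2^n - a| ≤ (1/2)^n := by
    intro n
    have hpow : (0:ℝ) < 2^n := by positivity
    have h1 : (⌊a * 2^n⌋₊ : ℝ) ≤ a * 2^n := Nat.floor_le (by positivity)
    have h2 : a * 2^n < (⌊a * 2^n⌋₊ : ℝ) + 1 := Nat.lt_floor_add_one _
    have e1 : (1/2:ℝ)^n = 1/2^n := by rw [div_pow]; norm_num
    rw [abs_le]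
    constructor
    on_goal 1 => rw [neg_le, neg_sub, sub_le_iff_le_add, e1, ← add_div, le_div_iff₀ hpow]
    on_goal 2 => rw [sub_le_iff_le_add, e1, div_le_iff₀ hpow, add_mul, div_mul_cancel₀ _ (ne_of_gt hpow)]
    all_goals linarith
  have h0 : Tendsto (fun n : ℕ => |(⌊a * 2^n⌋₊ : ℝ) / 2^n - a|) atTop (𝓝 0) :=
    squeeze_zero (fun n => abs_nonneg _) key
      (tendsto_pow_atTop_nhds_zero_of_lt_one (by norm_num) (by norm_num))
  have := h0.congr' (Eventually.of_forall fun n => rfl)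
  rw [show (0:ℝ) = a - a by ring] at h0
  have h1 : Tendsto (fun n : ℕ => (⌊a * 2^n⌋₊ : ℝ) / 2^n - a) atTop (𝓝 0) := by
    rw [tendsto_zero_iff_abs_tendsto_zero]
    exact squeeze_zero (fun n => abs_nonneg _) key
      (tendsto_pow_atTop_nhds_zero_of_lt_one (by norm_num) (by norm_num))
  have := h1.add (tendsto_const_nhds (x := a))
  simpa using this

def KMseg {X : Type*} (m : X → X → X) (x y : X) : ℕ → ℕ → X
  | 0, k => if k = 0 then x else y
  | n+1, k =>
    if k % 2 = 0 then KMseg m x y n (k/2)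
    else m (KMseg m x y n (k/2)) (KMseg m x y n (k/2+1))

section KM
variable {X : Type*} [MetricSpace X]
variable (m : X → X → X)
variable (hm : ∀ y z x : X, dist x (m y z) ^ 2 ≤ (dist x y ^ 2 + dist x z ^ 2) / 2 - dist y z ^ 2 / 4)

theorem KMseg_even (x y : X) (n j : ℕ) : KMseg m x y (n+1) (2*j) = KMseg m x y n j := by
  simp [KMseg, Nat.mul_div_cancel_left, Nat.mul_mod_right]

theorem KMseg_odd (x y : X) (n j : ℕ) :
    KMseg m x y (n+1) (2*j+1) = m (KMseg m x y n j) (KMseg m x y n (j+1)) := by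
  have h1 : (2*j+1) % 2 = 1 := by omega
  have h2 : (2*j+1) / 2 = j := by omega
  simp [KMseg, h1, h2]

theorem KMseg_zero (x y : X) (n : ℕ) : KMseg m x y n 0 = x := by
  induction n with
  | zero => simp [KMseg]
  | succ n ih => simpa using (KMseg_even m x y n 0).trans ih

theorem KMseg_top (x y : X) (n : ℕ) : KMseg m x y n (2^n) = y := by
  induction n with
  | zero => simp [KMseg]
  | succ n ih =>
    have h : (2:ℕ)^(n+1) = 2 * 2^n := by ring
    rw [h, KMseg_even]; exact ih

include hm

theorem KM.mid_left (y z : X) : dist y (m y z) = dist y z / 2 ∧ dist z (m y z) = dist y z / 2 := by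
  have h1 := hm y z y
  have h2 := hm y z z
  simp only [dist_self] at h1 h2
  rw [dist_comm z y] at h2
  have hy : dist y (m y z) ≤ dist y z / 2 := by
    nlinarith [dist_nonneg (x := y) (y := m y z), dist_nonneg (x := y) (y := z)]
  have hz : dist z (m y z) ≤ dist y z / 2 := by
    nlinarith [dist_nonneg (x := z) (y := m y z), dist_nonneg (x := y) (y := z)]
  have htr : dist y z ≤ dist y (m y z) + dist (m y z) z := dist_triangle _ _ _
  rw [dist_comm (m y z) z] at htr
  constructor <;> linarith

theorem KM.mid_unique {y z w : X} (h1 : dist w y = dist y z / 2) (h2 : dist w z = dist y z / 2) :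
    w = m y z := by
  have h := hm y z w
  rw [h1, h2] at h
  have h0 : dist w (m y z) ^ 2 ≤ 0 := by ring_nf at h ⊢; linarith
  have : dist w (m y z) = 0 := by nlinarith [dist_nonneg (x := w) (y := m y z)]
  exact dist_eq_zero.1 this

theorem KM.mid_comm (y z : X) : m y z = m z y := by
  obtain ⟨h1, h2⟩ := KM.mid_left m hm z y
  refine (KM.mid_unique m hm ?_ ?_).symm <;> rw [dist_comm y z]
  · rw [dist_comm]; exact h2
  · rw [dist_comm]; exact h1

theorem KM.mid_lip_right (x y z : X) : dist (m x y) (m x z) ≤ dist y z / 2 := by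
  have h1 := hm x z (m x y)
  have h2 := hm x y z
  obtain ⟨hl, _⟩ := KM.mid_left m hm x y
  rw [dist_comm (m x y) x] at h1
  rw [hl] at h1
  rw [dist_comm z (m x y)] at h2
  rw [dist_comm z x, dist_comm z y] at h2
  have hsq : dist (m x y) (m x z) ^ 2 ≤ (dist y z / 2) ^ 2 := by nlinarith
  have h0 : (0:ℝ) ≤ dist y z / 2 := by positivity
  nlinarith [dist_nonneg (x := m x y) (y := m x z)]

theorem KM.mid_lip (a b c d : X) : dist (m a b) (m c d) ≤ (dist a c + dist b d) / 2 := by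
  have h1 : dist (m a b) (m a d) ≤ dist b d / 2 := KM.mid_lip_right m hm a b d
  have h2 : dist (m a d) (m c d) ≤ dist a c / 2 := by
    rw [KM.mid_comm m hm a d, KM.mid_comm m hm c d]
    exact KM.mid_lip_right m hm d a c
  calc dist (m a b) (m c d) ≤ dist (m a b) (m a d) + dist (m a d) (m c d) := dist_triangle _ _ _
    _ ≤ (dist a c + dist b d) / 2 := by linarith

theorem KMseg_consec (x y : X) : ∀ n, ∀ k, k + 1 ≤ 2^n →
    dist (KMseg m x y n k) (KMseg m x y n (k+1)) = dist x y / 2^n := by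
  intro n
  induction n with
  | zero =>
    intro k hk
    have h1 : (2:ℕ)^0 = 1 := pow_zero 2
    have : k = 0 := by omega
    subst this
    simp [KMseg]
  | succ n ih =>
    intro k hk
    have h2 : (2:ℕ)^(n+1) = 2*2^n := by ring
    rcases Nat.even_or_odd k with ⟨j, hj⟩ | ⟨j, hj⟩
    · have hj' : k = 2*j := by omega
      subst hj'
      have hj2 : j + 1 ≤ 2^n := by omega
      rw [KMseg_even, show 2*j+1 = 2*j+1 from rfl, KMseg_odd]
      have hml := (KM.mid_left m hm (KMseg m x y n j) (KMseg m x y n (j+1))).1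
      rw [hml, ih j hj2, pow_succ]
      ring
    · have hj' : k = 2*j+1 := by omega
      subst hj'
      have hj2 : j + 1 ≤ 2^n := by omega
      rw [show 2*j+1+1 = 2*(j+1) by ring, KMseg_odd, KMseg_even]
      have hml := (KM.mid_left m hm (KMseg m x y n j) (KMseg m x y n (j+1))).2
      rw [dist_comm, hml, ih j hj2, pow_succ]
      ring

theorem KMseg_upper (x y : X) (n : ℕ) : ∀ k l, k ≤ l → l ≤ 2^n →
    dist (KMseg m x y n k) (KMseg m x y n l) ≤ ((l : ℝ) - k) * (dist x y / 2^n) := by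
  intro k l hkl hl
  induction l with
  | zero =>
    have : k = 0 := by omega
    subst this; simp
  | succ l ihl =>
    rcases Nat.lt_or_ge k (l+1) with h | h
    · have hk_le : k ≤ l := by omega
      have hl' : l ≤ 2^n := by omega
      calc dist (KMseg m x y n k) (KMseg m x y n (l+1))
          ≤ dist (KMseg m x y n k) (KMseg m x y n l)
            + dist (KMseg m x y n l) (KMseg m x y n (l+1)) := dist_triangle _ _ _
        _ ≤ ((l:ℝ) - k) * (dist x y / 2^n) + dist x y / 2^n := by
            have hA := ihl hk_le hl'
            have hB := KMseg_consec m hm x y n l (by omega)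
            linarith
        _ = (((l+1 : ℕ) : ℝ) - k) * (dist x y / 2^n) := by push_cast; ring
    · have : k = l + 1 := by omega
      subst this
      simp

theorem KMseg_dist (x y : X) (n : ℕ) (k l : ℕ) (hkl : k ≤ l) (hl : l ≤ 2^n) :
    dist (KMseg m x y n k) (KMseg m x y n l) = ((l : ℝ) - k) * (dist x y / 2^n) := by
  have hup := KMseg_upper m hm x y n k l hkl hl
  have h1 := KMseg_upper m hm x y n 0 k (by omega) (by omega)
  have h2 := KMseg_upper m hm x y n l (2^n) hl le_rfl
  have htot : dist (KMseg m x y n 0) (KMseg m x y n (2^n)) = dist x y := by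
    rw [KMseg_zero, KMseg_top]
  have htri : dist (KMseg m x y n 0) (KMseg m x y n (2^n)) ≤
      dist (KMseg m x y n 0) (KMseg m x y n k) + dist (KMseg m x y n k) (KMseg m x y n l)
        + dist (KMseg m x y n l) (KMseg m x y n (2^n)) := dist_triangle4 _ _ _ _
  have hpow : (0:ℝ) < 2^n := by positivity
  have hcast : ((2^n : ℕ) : ℝ) = 2^n := by push_cast; ring
  rw [htot] at htri
  simp only [Nat.cast_zero, sub_zero, hcast] at h1 h2
  have hd : 0 ≤ dist x y := dist_nonneg
  have hlow : ((l : ℝ) - k) * (dist x y / 2^n) ≤ dist (KMseg m x y n k) (KMseg m x y n l) := by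
    have hfield : dist x y = (k : ℝ) * (dist x y / 2^n) + ((2^n : ℝ) - l) * (dist x y / 2^n)
        + ((l:ℝ) - k) * (dist x y / 2^n) := by field_simp; ring
    linarith
  linarith



include hm in
theorem KM.exists_geo [CompleteSpace X] (x y : X) :
    ∃ g : ℝ → X, g 0 = x ∧ g 1 = y ∧ ∀ a b : ℝ, 0 ≤ a → a ≤ 1 → 0 ≤ b → b ≤ 1 →
      dist (g a) (g b) = |a - b| * dist x y := by
  set u : ℝ → ℕ → X := fun t n => KMseg m x y n ⌊t * 2^n⌋₊ with hu_def
  have hidx : ∀ t : ℝ, t ≤ 1 → ∀ n : ℕ, ⌊t * 2^n⌋₊ ≤ 2^n := by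
    intro t ht n
    have h1 : t * 2^n ≤ ((2^n : ℕ) : ℝ) := by
      push_cast
      nlinarith [pow_pos (by norm_num : (0:ℝ) < 2) n]
    calc ⌊t * 2^n⌋₊ ≤ ⌊((2^n : ℕ) : ℝ)⌋₊ := Nat.floor_le_floor h1
      _ = 2^n := Nat.floor_natCast _
  have hcauchy : ∀ t : ℝ, 0 ≤ t → t ≤ 1 → CauchySeq (u t) := by
    intro t ht0 ht1
    apply cauchySeq_of_le_geometric (r := 1/2) (C := dist x y) (by norm_num)
    intro n
    have hpow : (0:ℝ) < 2^n := by positivity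
    have hpow1 : (0:ℝ) < 2^(n+1) := by positivity
    have hps : (2:ℝ)^(n+1) = 2 * 2^n := by ring
    set a := ⌊t * 2^n⌋₊ with ha_def
    set b := ⌊t * 2^(n+1)⌋₊ with hb_def
    have hfl1 : (a : ℝ) ≤ t * 2^n := Nat.floor_le (by positivity)
    have hfl2 : t * 2^n < (a : ℝ) + 1 := Nat.lt_floor_add_one _
    have hfl3 : (b : ℝ) ≤ t * 2^(n+1) := Nat.floor_le (by positivity)
    have h2a : 2*a ≤ b := by
      apply Nat.le_floor
      push_cast
      nlinarith
    have hb1 : b ≤ 2*a + 1 := by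
      have hlt : (b:ℝ) < 2*(a:ℝ) + 2 := by nlinarith
      have hlt2 : (b:ℝ) < ((2*a + 2 : ℕ) : ℝ) := by push_cast; linarith
      have := Nat.cast_lt (α := ℝ) |>.1 hlt2
      omega
    have hun : u t n = KMseg m x y (n+1) (2*a) := (KMseg_even m x y n a).symm
    have hb2 : b ≤ 2^(n+1) := hidx t ht1 (n+1)
    have hup := KMseg_upper m hm x y (n+1) (2*a) b h2a hb2
    have hd : (0:ℝ) ≤ dist x y := dist_nonneg
    have hfin : dist (u t n) (u t (n+1)) ≤ ((b:ℝ) - ((2*a:ℕ):ℝ)) * (dist x y / 2^(n+1)) := by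
      rw [hun]; exact hup
    have h1 : (b:ℝ) - ((2*a:ℕ):ℝ) ≤ 1 := by
      have hc : (b:ℝ) ≤ ((2*a+1 : ℕ):ℝ) := by exact_mod_cast hb1
      push_cast at hc ⊢
      linarith
    have h0 : (0:ℝ) ≤ (b:ℝ) - ((2*a:ℕ):ℝ) := by
      have hc : ((2*a:ℕ):ℝ) ≤ (b:ℝ) := by exact_mod_cast h2a
      linarith
    have e1 : (1/2:ℝ)^n = 1/2^n := by rw [div_pow]; norm_num
    have e2 : dist x y / 2^(n+1) ≤ dist x y * (1/2)^n := by
      rw [e1, mul_one_div]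
      apply div_le_div_of_nonneg_left hd hpow
      nlinarith
    have e3 : ((b:ℝ) - ((2*a:ℕ):ℝ)) * (dist x y / 2^(n+1)) ≤ 1 * (dist x y / 2^(n+1)) :=
      mul_le_mul_of_nonneg_right h1 (by positivity)
    calc dist (u t n) (u t (n+1)) ≤ ((b:ℝ) - ((2*a:ℕ):ℝ)) * (dist x y / 2^(n+1)) := hfin
      _ ≤ 1 * (dist x y / 2^(n+1)) := e3
      _ = dist x y / 2^(n+1) := by ring
      _ ≤ dist x y * (1/2)^n := e2
  have hconv : ∀ t : ℝ, 0 ≤ t → t ≤ 1 → ∃ p : X, Tendsto (u t) atTop (𝓝 p) := by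
    intro t h0 h1
    exact cauchySeq_tendsto_of_complete (hcauchy t h0 h1)
  classical
  refine ⟨fun t => if h : 0 ≤ t ∧ t ≤ 1 then (hconv t h.1 h.2).choose else x, ?_, ?_, ?_⟩
  · beta_reduce
    rw [dif_pos ⟨le_refl 0, by norm_num⟩]
    have hG := (hconv 0 (le_refl 0) (by norm_num)).choose_spec
    have hc : ∀ n, u 0 n = x := by
      intro n
      simp only [hu_def]
      norm_num
      exact KMseg_zero m x y n
    exact tendsto_nhds_unique (hG.congr' (Eventually.of_forall hc)) tendsto_const_nhds
  · beta_reduce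
    rw [dif_pos ⟨by norm_num, le_refl 1⟩]
    have hG := (hconv 1 (by norm_num) (le_refl 1)).choose_spec
    have hc : ∀ n, u 1 n = y := by
      intro n
      simp only [hu_def, one_mul]
      have : ⌊((2:ℝ)^n)⌋₊ = 2^n := by
        rw [show ((2:ℝ)^n) = ((2^n : ℕ) : ℝ) by push_cast; ring, Nat.floor_natCast]
      rw [this]
      exact KMseg_top m x y n
    exact tendsto_nhds_unique (hG.congr' (Eventually.of_forall hc)) tendsto_const_nhds
  · intro a b ha0 ha1 hb0 hb1
    beta_reduce
    rw [dif_pos ⟨ha0, ha1⟩, dif_pos ⟨hb0, hb1⟩]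
    have hGa := (hconv a ha0 ha1).choose_spec
    have hGb := (hconv b hb0 hb1).choose_spec
    have hda := hGa.dist hGb
    have heq : ∀ n : ℕ, dist (u a n) (u b n)
        = |(⌊a * 2^n⌋₊ : ℝ)/2^n - (⌊b * 2^n⌋₊ : ℝ)/2^n| * dist x y := by
      intro n
      have hpow : (0:ℝ) < 2^n := by positivity
      rcases le_total (⌊a * 2^n⌋₊) (⌊b * 2^n⌋₊) with h | h
      · rw [show dist (u a n) (u b n) = dist (KMseg m x y n ⌊a * 2^n⌋₊) (KMseg m x y n ⌊b * 2^n⌋₊) from rfl]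
        rw [KMseg_dist m hm x y n _ _ h (hidx b hb1 n)]
        have hnn : (0:ℝ) ≤ (⌊b * 2^n⌋₊ : ℝ)/2^n - (⌊a * 2^n⌋₊ : ℝ)/2^n := by
          apply sub_nonneg.2; gcongr <;> exact_mod_cast h
        rw [abs_sub_comm, abs_of_nonneg hnn]
        field_simp
      · rw [dist_comm]
        rw [show dist (u b n) (u a n) = dist (KMseg m x y n ⌊b * 2^n⌋₊) (KMseg m x y n ⌊a * 2^n⌋₊) from rfl]
        rw [KMseg_dist m hm x y n _ _ h (hidx a ha1 n)]
        have hnn : (0:ℝ) ≤ (⌊a * 2^n⌋₊ : ℝ)/2^n - (⌊b * 2^n⌋₊ : ℝ)/2^n := by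
          apply sub_nonneg.2; gcongr <;> exact_mod_cast h
        rw [abs_of_nonneg hnn]
        field_simp
    have hlim2 : Tendsto (fun n : ℕ => |(⌊a * 2^n⌋₊ : ℝ)/2^n - (⌊b * 2^n⌋₊ : ℝ)/2^n| * dist x y)
        atTop (𝓝 (|a - b| * dist x y)) :=
      (((KM.floor_tendsto ha0).sub (KM.floor_tendsto hb0)).abs).mul_const _
    exact tendsto_nhds_unique (hda.congr heq) hlim2

end KM

theorem KM.floor_le_pow {t : ℝ} (ht : t ≤ 1) (n : ℕ) : ⌊t * 2^n⌋₊ ≤ 2^n := by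
  have h1 : t * 2^n ≤ ((2^n : ℕ) : ℝ) := by
    push_cast
    nlinarith [pow_pos (by norm_num : (0:ℝ) < 2) n]
  calc ⌊t * 2^n⌋₊ ≤ ⌊((2^n : ℕ) : ℝ)⌋₊ := Nat.floor_le_floor h1
    _ = 2^n := Nat.floor_natCast _

section Geo
variable {X : Type*} [MetricSpace X]
variable (m : X → X → X)
variable (hm : ∀ y z x : X, dist x (m y z) ^ 2 ≤ (dist x y ^ 2 + dist x z ^ 2) / 2 - dist y z ^ 2 / 4)
variable {g g₁ g₂ : ℝ → X} {s s₁ s₂ : ℝ}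

def KMIsGeo (g : ℝ → X) (s : ℝ) : Prop :=
  ∀ a b : ℝ, 0 ≤ a → a ≤ 1 → 0 ≤ b → b ≤ 1 → dist (g a) (g b) = |a - b| * s

theorem KMIsGeo.s_nonneg (hg : KMIsGeo g s) : 0 ≤ s := by
  have := hg 0 1 le_rfl zero_le_one zero_le_one le_rfl
  have h1 : |(0:ℝ) - 1| = 1 := by norm_num
  rw [h1, one_mul] at this
  rw [← this]; exact dist_nonneg

include hm in
theorem KMIsGeo.mid (hg : KMIsGeo g s) {a b : ℝ} (ha0 : 0 ≤ a) (ha1 : a ≤ 1)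
    (hb0 : 0 ≤ b) (hb1 : b ≤ 1) : g ((a+b)/2) = m (g a) (g b) := by
  have hs := hg.s_nonneg
  have hmem0 : (0:ℝ) ≤ (a+b)/2 := by linarith
  have hmem1 : (a+b)/2 ≤ 1 := by linarith
  apply KM.mid_unique m hm
  · rw [hg _ _ hmem0 hmem1 ha0 ha1, hg _ _ ha0 ha1 hb0 hb1]
    rw [show (a+b)/2 - a = (b-a)/2 by ring, abs_div, abs_sub_comm a b]
    norm_num
    ring
  · rw [hg _ _ hmem0 hmem1 hb0 hb1, hg _ _ ha0 ha1 hb0 hb1]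
    rw [show (a+b)/2 - b = (a-b)/2 by ring, abs_div]
    norm_num
    ring

include hm in
theorem KMIsGeo.star (hg : KMIsGeo g s) (p : X) {l : ℝ} (hl0 : 0 ≤ l) (hl1 : l ≤ 1) :
    dist p (g l) ^ 2 ≤ (1-l) * dist p (g 0) ^ 2 + l * dist p (g 1) ^ 2 - l*(1-l)*s^2 := by
  have hs := hg.s_nonneg
  set B : ℝ → ℝ := fun l => (1-l) * dist p (g 0) ^ 2 + l * dist p (g 1) ^ 2 - l*(1-l)*s^2
    with hB_def
  have hdy : ∀ n k : ℕ, k ≤ 2^n → dist p (g ((k:ℝ)/2^n)) ^ 2 ≤ B ((k:ℝ)/2^n) := by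
    intro n
    induction n with
    | zero =>
      intro k hk
      have h1 : (2:ℕ)^0 = 1 := pow_zero 2
      interval_cases k
      · have e : ((0:ℕ):ℝ)/2^(0:ℕ) = 0 := by norm_num
        rw [e]; simp [hB_def]
      · have e : ((1:ℕ):ℝ)/2^(0:ℕ) = 1 := by norm_num
        rw [e]; simp [hB_def]
    | succ n ih =>
      intro k hk
      have h2 : (2:ℕ)^(n+1) = 2*2^n := by ring
      have hpow : (0:ℝ) < 2^n := by positivity
      rcases Nat.even_or_odd k with ⟨j, hj⟩ | ⟨j, hj⟩
      · have hj' : k = 2*j := by omega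
        subst hj'
        have e : ((2*j:ℕ):ℝ)/2^(n+1) = ((j:ℕ):ℝ)/2^n := by push_cast; ring
        rw [e]
        exact ih j (by omega)
      · have hj' : k = 2*j+1 := by omega
        subst hj'
        have hj1 : j + 1 ≤ 2^n := by omega
        set a : ℝ := (j:ℝ)/2^n with ha_def
        set b : ℝ := ((j+1:ℕ):ℝ)/2^n with hb2_def
        have ha0 : 0 ≤ a := by positivity
        have hb0 : 0 ≤ b := by positivity
        have ha1 : a ≤ 1 := by
          rw [ha_def, div_le_one hpow]
          exact_mod_cast Nat.le_of_succ_le hj1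
        have hb1 : b ≤ 1 := by
          rw [hb2_def, div_le_one hpow]
          exact_mod_cast hj1
        have e : ((2*j+1:ℕ):ℝ)/2^(n+1) = (a+b)/2 := by
          rw [ha_def, hb2_def]; push_cast; ring
        have hba : b - a = 1/2^n := by rw [ha_def, hb2_def]; push_cast; ring
        rw [e, hg.mid m hm ha0 ha1 hb0 hb1]
        have hmm := hm (g a) (g b) p
        have hab : dist (g a) (g b) = (b - a) * s := by
          rw [hg _ _ ha0 ha1 hb0 hb1, abs_sub_comm, abs_of_nonneg (by rw [hba]; positivity)]
        have hIa := ih j (by omega)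
        have hIb := ih (j+1) hj1
        rw [← ha_def] at hIa
        rw [← hb2_def] at hIb
        have hBmid : B ((a+b)/2) = (B a + B b)/2 - ((b-a)*s)^2/4 := by
          simp only [hB_def]; ring
        rw [hBmid, ← hab]
        simp only [hB_def] at hIa hIb ⊢
        nlinarith [hmm, hIa, hIb]
  -- density
  have hfl := KM.floor_tendsto hl0
  have hln0 : ∀ n : ℕ, (0:ℝ) ≤ (⌊l * 2^n⌋₊ : ℝ)/2^n := fun n => by positivity
  have hln1 : ∀ n : ℕ, (⌊l * 2^n⌋₊ : ℝ)/2^n ≤ 1 := by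
    intro n
    have hpow : (0:ℝ) < 2^n := by positivity
    rw [div_le_one hpow]
    exact_mod_cast (by exact_mod_cast KM.floor_le_pow hl1 n : ((⌊l * 2^n⌋₊:ℕ):ℝ) ≤ ((2^n:ℕ):ℝ))
  have hgl : Tendsto (fun n : ℕ => g ((⌊l * 2^n⌋₊ : ℝ)/2^n)) atTop (𝓝 (g l)) := by
    rw [tendsto_iff_dist_tendsto_zero]
    have hbd : ∀ n : ℕ, dist (g ((⌊l * 2^n⌋₊ : ℝ)/2^n)) (g l) = |(⌊l * 2^n⌋₊ : ℝ)/2^n - l| * s :=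
      fun n => hg _ _ (hln0 n) (hln1 n) hl0 hl1
    have hz : Tendsto (fun n : ℕ => |(⌊l * 2^n⌋₊ : ℝ)/2^n - l| * s) atTop (𝓝 (|l - l| * s)) :=
      ((hfl.sub_const l).abs).mul_const s
    simp only [sub_self, abs_zero, zero_mul] at hz
    exact (hz.congr (fun n => (hbd n).symm))
  have hd2 : Tendsto (fun n : ℕ => dist p (g ((⌊l * 2^n⌋₊ : ℝ)/2^n)) ^ 2) atTop
      (𝓝 (dist p (g l) ^ 2)) := (tendsto_const_nhds.dist hgl).pow 2
  have hcB : Continuous B := by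
    simp only [hB_def]
    continuity
  have hB2 : Tendsto (fun n : ℕ => B ((⌊l * 2^n⌋₊ : ℝ)/2^n)) atTop (𝓝 (B l)) :=
    (hcB.tendsto l).comp hfl
  exact le_of_tendsto_of_tendsto' hd2 hB2 (fun n => hdy n _ (KM.floor_le_pow hl1 n))

include hm in
theorem KMIsGeo.convex (hg1 : KMIsGeo g₁ s₁) (hg2 : KMIsGeo g₂ s₂) {l : ℝ}
    (hl0 : 0 ≤ l) (hl1 : l ≤ 1) :
    dist (g₁ l) (g₂ l) ≤ (1-l) * dist (g₁ 0) (g₂ 0) + l * dist (g₁ 1) (g₂ 1) := by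
  set B : ℝ → ℝ := fun l => (1-l) * dist (g₁ 0) (g₂ 0) + l * dist (g₁ 1) (g₂ 1) with hB_def
  have hdy : ∀ n k : ℕ, k ≤ 2^n → dist (g₁ ((k:ℝ)/2^n)) (g₂ ((k:ℝ)/2^n)) ≤ B ((k:ℝ)/2^n) := by
    intro n
    induction n with
    | zero =>
      intro k hk
      have h1 : (2:ℕ)^0 = 1 := pow_zero 2
      interval_cases k
      · have e : ((0:ℕ):ℝ)/2^(0:ℕ) = 0 := by norm_num
        rw [e]; simp [hB_def]
      · have e : ((1:ℕ):ℝ)/2^(0:ℕ) = 1 := by norm_num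
        rw [e]; simp [hB_def]
    | succ n ih =>
      intro k hk
      have h2 : (2:ℕ)^(n+1) = 2*2^n := by ring
      have hpow : (0:ℝ) < 2^n := by positivity
      rcases Nat.even_or_odd k with ⟨j, hj⟩ | ⟨j, hj⟩
      · have hj' : k = 2*j := by omega
        subst hj'
        have e : ((2*j:ℕ):ℝ)/2^(n+1) = ((j:ℕ):ℝ)/2^n := by push_cast; ring
        rw [e]
        exact ih j (by omega)
      · have hj' : k = 2*j+1 := by omega
        subst hj'
        have hj1 : j + 1 ≤ 2^n := by omega
        set a : ℝ := (j:ℝ)/2^n with ha_def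
        set b : ℝ := ((j+1:ℕ):ℝ)/2^n with hb2_def
        have ha0 : 0 ≤ a := by positivity
        have hb0 : 0 ≤ b := by positivity
        have ha1 : a ≤ 1 := by
          rw [ha_def, div_le_one hpow]
          exact_mod_cast Nat.le_of_succ_le hj1
        have hb1 : b ≤ 1 := by
          rw [hb2_def, div_le_one hpow]
          exact_mod_cast hj1
        have e : ((2*j+1:ℕ):ℝ)/2^(n+1) = (a+b)/2 := by
          rw [ha_def, hb2_def]; push_cast; ring
        rw [e, hg1.mid m hm ha0 ha1 hb0 hb1, hg2.mid m hm ha0 ha1 hb0 hb1]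
        have hIa := ih j (by omega)
        have hIb := ih (j+1) hj1
        rw [← ha_def] at hIa
        rw [← hb2_def] at hIb
        have hlip := KM.mid_lip m hm (g₁ a) (g₁ b) (g₂ a) (g₂ b)
        have hBmid : B ((a+b)/2) = (B a + B b)/2 := by simp only [hB_def]; ring
        rw [hBmid]
        simp only [hB_def] at hIa hIb ⊢
        linarith
  have hfl := KM.floor_tendsto hl0
  have hln0 : ∀ n : ℕ, (0:ℝ) ≤ (⌊l * 2^n⌋₊ : ℝ)/2^n := fun n => by positivity
  have hln1 : ∀ n : ℕ, (⌊l * 2^n⌋₊ : ℝ)/2^n ≤ 1 := by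
    intro n
    have hpow : (0:ℝ) < 2^n := by positivity
    rw [div_le_one hpow]
    exact_mod_cast (by exact_mod_cast KM.floor_le_pow hl1 n : ((⌊l * 2^n⌋₊:ℕ):ℝ) ≤ ((2^n:ℕ):ℝ))
  have hgl1 : Tendsto (fun n : ℕ => g₁ ((⌊l * 2^n⌋₊ : ℝ)/2^n)) atTop (𝓝 (g₁ l)) := by
    rw [tendsto_iff_dist_tendsto_zero]
    have hbd : ∀ n : ℕ, dist (g₁ ((⌊l * 2^n⌋₊ : ℝ)/2^n)) (g₁ l) = |(⌊l * 2^n⌋₊ : ℝ)/2^n - l| * s₁ :=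
      fun n => hg1 _ _ (hln0 n) (hln1 n) hl0 hl1
    have hz : Tendsto (fun n : ℕ => |(⌊l * 2^n⌋₊ : ℝ)/2^n - l| * s₁) atTop (𝓝 (|l - l| * s₁)) :=
      ((hfl.sub_const l).abs).mul_const s₁
    simp only [sub_self, abs_zero, zero_mul] at hz
    exact (hz.congr (fun n => (hbd n).symm))
  have hgl2 : Tendsto (fun n : ℕ => g₂ ((⌊l * 2^n⌋₊ : ℝ)/2^n)) atTop (𝓝 (g₂ l)) := by
    rw [tendsto_iff_dist_tendsto_zero]
    have hbd : ∀ n : ℕ, dist (g₂ ((⌊l * 2^n⌋₊ : ℝ)/2^n)) (g₂ l) = |(⌊l * 2^n⌋₊ : ℝ)/2^n - l| * s₂ :=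
      fun n => hg2 _ _ (hln0 n) (hln1 n) hl0 hl1
    have hz : Tendsto (fun n : ℕ => |(⌊l * 2^n⌋₊ : ℝ)/2^n - l| * s₂) atTop (𝓝 (|l - l| * s₂)) :=
      ((hfl.sub_const l).abs).mul_const s₂
    simp only [sub_self, abs_zero, zero_mul] at hz
    exact (hz.congr (fun n => (hbd n).symm))
  have hd2 : Tendsto (fun n : ℕ => dist (g₁ ((⌊l * 2^n⌋₊ : ℝ)/2^n)) (g₂ ((⌊l * 2^n⌋₊ : ℝ)/2^n)))
      atTop (𝓝 (dist (g₁ l) (g₂ l))) := hgl1.dist hgl2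
  have hcB : Continuous B := by
    simp only [hB_def]
    continuity
  have hB2 : Tendsto (fun n : ℕ => B ((⌊l * 2^n⌋₊ : ℝ)/2^n)) atTop (𝓝 (B l)) :=
    (hcB.tendsto l).comp hfl
  exact le_of_tendsto_of_tendsto' hd2 hB2 (fun n => hdy n _ (KM.floor_le_pow hl1 n))

end Geo


/-- **Karlsson–Margulis geodesic tracking for a semicontraction of a complete CAT(0)
space.**  The orbit `Tⁿx₀` sublinearly tracks a geodesic ray `γ` with speed
`A = lim (1/n) d(x, Tⁿx)` (the limit exists by subadditivity and does not depend on `x`);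
when `A = 0` the constant ray at `x₀` is allowed. -/
theorem cat0_semicontraction_tracks_geodesic
    {X : Type*} [MetricSpace X] [CompleteSpace X] [Nonempty X]
    (hcat : ∀ y₁ y₂ : X, ∃ m : X, ∀ x : X,
      dist x m ^ 2 ≤ (dist x y₁ ^ 2 + dist x y₂ ^ 2) / 2 - dist y₁ y₂ ^ 2 / 4)
    (T : X → X) (hT : ∀ x y : X, dist (T x) (T y) ≤ dist x y) :
    ∃ A : ℝ, 0 ≤ A ∧
      (∀ x : X, Tendsto (fun n : ℕ => dist x (T^[n] x) / (n : ℝ)) atTop (𝓝 A)) ∧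
      ∀ x₀ : X, ∃ γ : ℝ → X,
        γ 0 = x₀ ∧
        ((∀ s t : ℝ, 0 ≤ s → 0 ≤ t → dist (γ s) (γ t) = |s - t|) ∨
          (A = 0 ∧ ∀ t : ℝ, γ t = x₀)) ∧
        Tendsto (fun n : ℕ => dist (T^[n] x₀) (γ (A * n)) / (n : ℝ)) atTop (𝓝 0) := by
  classical
  set m : X → X → X := fun y z => (hcat y z).choose with hm_def
  have hm : ∀ y z x : X, dist x (m y z) ^ 2 ≤ (dist x y ^ 2 + dist x z ^ 2) / 2 - dist y z ^ 2 / 4 :=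
    fun y z x => (hcat y z).choose_spec x
  -- iterates of a semicontraction are semicontractions
  have hTn : ∀ (p : ℕ) (a c : X), dist (T^[p] a) (T^[p] c) ≤ dist a c := by
    intro p
    induction p with
    | zero => intro a c; simp
    | succ p ih =>
      intro a c
      rw [Function.iterate_succ_apply, Function.iterate_succ_apply]
      exact (ih (T a) (T c)).trans (hT a c)
  -- subadditivity of the orbit distances
  have hsub : ∀ x : X, Subadditive (fun n => dist x (T^[n] x)) := by
    intro x p q
    have h1 : T^[p+q] x = T^[p] (T^[q] x) := Function.iterate_add_apply T p q x
    calc dist x (T^[p+q] x) = dist x (T^[p] (T^[q] x)) := by rw [h1]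
      _ ≤ dist x (T^[p] x) + dist (T^[p] x) (T^[p] (T^[q] x)) := dist_triangle _ _ _
      _ ≤ dist x (T^[p] x) + dist x (T^[q] x) := by
          have := hTn p x (T^[q] x)
          linarith
  have hbdd : ∀ x : X, BddBelow (Set.range fun n : ℕ => dist x (T^[n] x) / n) := by
    intro x
    refine ⟨0, ?_⟩
    rintro r ⟨n, rfl⟩
    positivity
  obtain ⟨xs⟩ := ‹Nonempty X›
  set A : ℝ := (hsub xs).lim with hA_def
  have hlimbase := (hsub xs).tendsto_lim (hbdd xs)
  have hlim : ∀ x : X, Tendsto (fun n : ℕ => dist x (T^[n] x) / (n : ℝ)) atTop (𝓝 A) := by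
    intro x
    have hdiff : Tendsto (fun n : ℕ =>
        dist x (T^[n] x) / (n:ℝ) - dist xs (T^[n] xs) / (n:ℝ)) atTop (𝓝 0) := by
      rw [tendsto_zero_iff_abs_tendsto_zero]
      apply squeeze_zero (fun n => abs_nonneg _) (g := fun n : ℕ => 2 * dist x xs / (n:ℝ))
      · intro n
        rcases Nat.eq_zero_or_pos n with hn | hn
        · subst hn; simp
        have hpos : (0:ℝ) < (n:ℝ) := by exact_mod_cast hn
        rw [div_sub_div_same, abs_div, abs_of_pos hpos]
        gcongr
        have ht1 := dist_triangle4 x xs (T^[n] xs) (T^[n] x)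
        have ht2 := dist_triangle4 xs x (T^[n] x) (T^[n] xs)
        have hc1 := hTn n xs x
        have hc2 := hTn n x xs
        have hd1 : dist (T^[n] xs) (T^[n] x) ≤ dist x xs := by
          rw [dist_comm x xs]; exact hc1
        have hd2 : dist (T^[n] x) (T^[n] xs) ≤ dist x xs := hc2
        rw [abs_le]
        constructor
        · rw [dist_comm xs x] at ht2
          linarith
        · linarith
      · exact tendsto_const_div_atTop_nhds_zero_nat (2 * dist x xs)
    have := hlimbase.add hdiff
    rw [add_zero] at this
    apply this.congr
    intro n
    ring
  have hA0 : 0 ≤ A := by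
    apply ge_of_tendsto' hlimbase
    intro n
    positivity
  refine ⟨A, hA0, hlim, ?_⟩
  intro x₀
  rcases eq_or_lt_of_le hA0 with hA | hApos
  · refine ⟨fun _ => x₀, rfl, Or.inr ⟨hA.symm, fun _ => rfl⟩, ?_⟩
    have h := hlim x₀
    rw [← hA] at h
    apply h.congr
    intro n
    rw [dist_comm]

  · -- A > 0 : construct the tracking geodesic ray
    set bb : ℕ → ℝ := fun n => dist x₀ (T^[n] x₀) with hbb_def
    have hbblim : Tendsto (fun n : ℕ => bb n / n) atTop (𝓝 A) := hlim x₀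
    have hAeq : A = (hsub x₀).lim := tendsto_nhds_unique hbblim ((hsub x₀).tendsto_lim (hbdd x₀))
    have hbnn : ∀ n, 0 ≤ bb n := fun n => dist_nonneg
    have hbn : ∀ n : ℕ, A * n ≤ bb n := by
      intro n
      rcases Nat.eq_zero_or_pos n with h | h
      · subst h; simp [hbb_def]
      · have h1 := (hsub x₀).lim_le_div (hbdd x₀) (n := n) (by omega)
        rw [← hAeq] at h1
        have hpos : (0:ℝ) < n := by exact_mod_cast h
        rw [le_div_iff₀ hpos] at h1
        exact h1
    have horb : ∀ k n : ℕ, k ≤ n → dist (T^[k] x₀) (T^[n] x₀) ≤ bb (n - k) := by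
      intro k n hk
      have h1 : T^[n] x₀ = T^[k] (T^[n-k] x₀) := by
        rw [← Function.iterate_add_apply]
        congr 1
        omega
      rw [h1]
      exact hTn k x₀ (T^[n-k] x₀)
    -- existence of arbitrarily large "good times"
    have hgood : ∀ ε : ℝ, 0 < ε → ∀ N : ℕ, ∃ n : ℕ, N < n ∧
        ∀ k : ℕ, k ≤ n → bb (n - k) ≤ bb n - (A - ε) * k := by
      intro ε hε N
      set h : ℕ → ℝ := fun j => bb j - (A - ε) * j with hh_def
      have hhge : ∀ j : ℕ, ε * j ≤ h j := by
        intro j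
        have h1 := hbn j
        simp only [hh_def]
        linarith
      obtain ⟨M, hM⟩ : ∃ M : ℝ, ∀ a ∈ Finset.range (N+1), h a ≤ M :=
        ⟨(Finset.range (N+1)).sup' ⟨0, by simp⟩ h, fun a ha => Finset.le_sup' h ha⟩
      obtain ⟨n₀, hn₀⟩ := exists_nat_gt (max (M / ε) N)
      have hn₀M : M < ε * n₀ := by
        have h1 : M / ε < n₀ := lt_of_le_of_lt (le_max_left _ _) hn₀
        rw [div_lt_iff₀ hε] at h1
        linarith
      obtain ⟨n, hn_mem, hn_max⟩ := Finset.exists_max_image (Finset.range (n₀+1)) h ⟨n₀, by simp⟩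
      refine ⟨n, ?_, ?_⟩
      · by_contra hcon
        push_neg at hcon
        have h1 : h n ≤ M := hM n (by simp; omega)
        have h2 : h n₀ ≤ h n := hn_max n₀ (by simp)
        have h3 : ε * n₀ ≤ h n₀ := hhge n₀
        linarith
      · intro k hk
        have hmem : n - k ∈ Finset.range (n₀+1) := by
          simp only [Finset.mem_range] at hn_mem ⊢
          omega
        have h1 := hn_max (n - k) hmem
        simp only [hh_def] at h1
        have hcast : ((n - k : ℕ) : ℝ) = (n : ℝ) - k := by
          push_cast [Nat.cast_sub hk]
          ring
        rw [hcast] at h1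
        linarith
    -- the sequence of good times
    set ε : ℕ → ℝ := fun i => 1 / (i + 1) with hε_def
    have hεpos : ∀ i : ℕ, 0 < ε i := fun i => by positivity
    have hεanti : ∀ i j : ℕ, i ≤ j → ε j ≤ ε i := by
      intro i j hij
      simp only [hε_def]
      have h1 : (i:ℝ) + 1 ≤ (j:ℝ) + 1 := by
        have : (i:ℝ) ≤ (j:ℝ) := by exact_mod_cast hij
        linarith
      exact one_div_le_one_div_of_le (by positivity) h1
    have hεlim : Tendsto ε atTop (𝓝 0) := tendsto_one_div_add_atTop_nhds_zero_nat
    set F : ℕ → ℕ → ℕ := fun i prev =>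
      (hgood (ε (i+1)) (hεpos (i+1)) (max prev ⌈bb prev / A⌉₊)).choose with hF_def
    set ns : ℕ → ℕ := fun i => Nat.rec ((hgood (ε 0) (hεpos 0) 0).choose) F i with hns_def
    have hns_good : ∀ i, ∀ k ≤ ns i, bb (ns i - k) ≤ bb (ns i) - (A - ε i) * k := by
      intro i
      cases i with
      | zero => exact ((hgood (ε 0) (hεpos 0) 0).choose_spec).2
      | succ i => exact ((hgood (ε (i+1)) (hεpos (i+1)) _).choose_spec).2
    have hns_gt : ∀ i, max (ns i) ⌈bb (ns i) / A⌉₊ < ns (i+1) := fun i =>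
      ((hgood (ε (i+1)) (hεpos (i+1)) _).choose_spec).1
    have hns_mono : StrictMono ns :=
      strictMono_nat_of_lt_succ (fun i => lt_of_le_of_lt (le_max_left _ _) (hns_gt i))
    have hns_pos : ∀ i, 0 < ns i := by
      intro i
      have h0 : 0 < ns 0 := ((hgood (ε 0) (hεpos 0) 0).choose_spec).1
      exact lt_of_lt_of_le h0 (hns_mono.le_iff_le.2 (Nat.zero_le i))
    have hrpos : ∀ i, 0 < bb (ns i) := by
      intro i
      have h2 : (0:ℝ) < (ns i : ℝ) := by exact_mod_cast hns_pos i
      exact lt_of_lt_of_le (mul_pos hApos h2) (hbn (ns i))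
    have hns_bb : ∀ i, bb (ns i) ≤ A * ns (i+1) := by
      intro i
      have h1 : ⌈bb (ns i) / A⌉₊ < ns (i+1) := lt_of_le_of_lt (le_max_right _ _) (hns_gt i)
      have h2 : bb (ns i) / A ≤ (⌈bb (ns i) / A⌉₊ : ℝ) := Nat.le_ceil _
      have h3 : ((⌈bb (ns i) / A⌉₊ : ℕ) : ℝ) ≤ ((ns (i+1) : ℕ) : ℝ) := by exact_mod_cast h1.le
      have h4 := h2.trans h3
      rw [div_le_iff₀ hApos] at h4
      linarith
    have hbb_mono : ∀ i j : ℕ, i ≤ j → bb (ns i) ≤ bb (ns j) := by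
      intro i j hij
      rcases eq_or_lt_of_le hij with rfl | hij'
      · exact le_rfl
      · calc bb (ns i) ≤ A * ns (i+1) := hns_bb i
          _ ≤ A * ns j := by
              have : ((ns (i+1) : ℕ) : ℝ) ≤ ((ns j : ℕ) : ℝ) := by
                exact_mod_cast hns_mono.monotone hij'
              nlinarith
          _ ≤ bb (ns j) := hbn (ns j)
    -- geodesics from x₀ to the orbit points
    have hgeo : ∀ n : ℕ, ∃ g : ℝ → X, g 0 = x₀ ∧ g 1 = T^[n] x₀ ∧ KMIsGeo g (bb n) :=
      fun n => KM.exists_geo m hm x₀ (T^[n] x₀)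
    set g : ℕ → ℝ → X := fun n => (hgeo n).choose with hg_def
    have hg0 : ∀ n, g n 0 = x₀ := fun n => (hgeo n).choose_spec.1
    have hg1 : ∀ n, g n 1 = T^[n] x₀ := fun n => (hgeo n).choose_spec.2.1
    have hgI : ∀ n, KMIsGeo (g n) (bb n) := fun n => (hgeo n).choose_spec.2.2
    -- the key comparison estimate
    set vD : ℕ → ℕ → ℝ := fun k j => (bb k - A * k) + ε j * k with hvD_def
    have hvD0 : ∀ k j, 0 ≤ vD k j := by
      intro k j
      have h1 := hbn k
      have h2 : (0:ℝ) ≤ ε j * k := by positivity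
      simp only [hvD_def]
      linarith
    have key : ∀ (k j : ℕ), k ≤ ns j → 0 < bb k → bb k ≤ bb (ns j) → ∀ t : ℝ, 0 ≤ t → t ≤ bb k →
        dist (g k (t / bb k)) (g (ns j) (t / bb (ns j))) ≤
          t * Real.sqrt (2 * (vD k j / bb k) + (vD k j / bb k) ^ 2) := by
      intro k j hkj hrp hrs t ht0 htr
      have hspos : 0 < bb (ns j) := lt_of_lt_of_le hrp hrs
      have hu : dist (T^[k] x₀) (T^[ns j] x₀) ≤ bb (ns j) - (A - ε j) * k := by
        have h1 := horb k (ns j) hkj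
        have h2 := hns_good j k hkj
        linarith
      set r := bb k with hr_def
      set s := bb (ns j) with hs_def
      set u := dist (T^[k] x₀) (T^[ns j] x₀) with hu_def
      set D := r + u - s with hD_def
      have hD0 : 0 ≤ D := by
        have h1 : s ≤ r + u := by
          calc s = dist x₀ (T^[ns j] x₀) := rfl
            _ ≤ dist x₀ (T^[k] x₀) + dist (T^[k] x₀) (T^[ns j] x₀) := dist_triangle _ _ _
            _ = r + u := rfl
        simp only [hD_def]
        linarith
      have hDv : D ≤ vD k j := by
        simp only [hD_def, hvD_def]
        linarith
      set l := r / s with hl_def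
      have hl0 : 0 ≤ l := by positivity
      have hl1 : l ≤ 1 := by rw [hl_def, div_le_one hspos]; exact hrs
      have hls : l * s = r := div_mul_cancel₀ _ (ne_of_gt hspos)
      -- endpoint estimate via the CN convexity inequality
      have hstar := (hgI (ns j)).star m hm (T^[k] x₀) hl0 hl1
      rw [hg0, hg1] at hstar
      rw [dist_comm (T^[k] x₀) x₀] at hstar
      have hueq : u = s - r + D := by simp only [hD_def]; ring
      have hstar2 : dist (T^[k] x₀) (g (ns j) l) ^ 2 ≤
          (1 - l) * r ^ 2 + l * (s - r + D) ^ 2 - l * (1 - l) * s ^ 2 := by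
        rw [← hueq]
        exact hstar
      have he2 : dist (T^[k] x₀) (g (ns j) l) ^ 2 ≤ 2 * r * D + D ^ 2 := by
        have hident : (1 - l) * r ^ 2 + l * (s - r + D) ^ 2 - l * (1 - l) * s ^ 2
            = 2 * (l * s) * D - 2 * (l * r) * D + l * D ^ 2 + (l * s - r) ^ 2 := by ring
        have hz : (l * s - r) ^ 2 = 0 := by rw [hls]; ring
        have hlr0 : 0 ≤ l * r := mul_nonneg hl0 hrp.le
        have hlrD : 0 ≤ (l * r) * D := mul_nonneg hlr0 hD0
        have hlD2 : l * D ^ 2 ≤ D ^ 2 := by nlinarith [sq_nonneg D]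
        rw [hident, hz, hls] at hstar2
        linarith
      set v := vD k j with hv_def
      have hv0 : 0 ≤ v := hvD0 k j
      have he2v : dist (T^[k] x₀) (g (ns j) l) ^ 2 ≤ 2 * r * v + v ^ 2 := by nlinarith
      have hYnn : 0 ≤ 2 * (v/r) + (v/r)^2 := by positivity
      have hev : dist (T^[k] x₀) (g (ns j) l) ≤ r * Real.sqrt (2 * (v/r) + (v/r)^2) := by
        have hsq : r * Real.sqrt (2 * (v/r) + (v/r)^2) = Real.sqrt (2*r*v + v^2) := by
          rw [show 2*r*v + v^2 = r^2 * (2*(v/r) + (v/r)^2) by field_simp]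
          rw [Real.sqrt_mul (sq_nonneg r), Real.sqrt_sq hrp.le]
        rw [hsq]
        exact (Real.le_sqrt dist_nonneg (by positivity)).2 he2v
      -- convexity between the two geodesics
      set g₂ : ℝ → X := fun a => g (ns j) (a * l) with hg2_def
      have hg₂ : KMIsGeo g₂ r := by
        intro a c ha0 ha1 hc0 hc1
        have hal1 : a * l ≤ 1 := by nlinarith
        have hcl1 : c * l ≤ 1 := by nlinarith
        have h1 : dist (g (ns j) (a*l)) (g (ns j) (c*l)) = |a*l - c*l| * s :=
          hgI (ns j) _ _ (by positivity) hal1 (by positivity) hcl1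
        simp only [hg2_def]
        rw [h1, show a*l - c*l = (a-c)*l by ring, abs_mul, abs_of_nonneg hl0, mul_assoc, hls]
      have hμ0 : (0:ℝ) ≤ t / r := by positivity
      have hμ1 : t / r ≤ 1 := by rw [div_le_one hrp]; exact htr
      have hconv := KMIsGeo.convex m hm (hgI k) hg₂ hμ0 hμ1
      have hz0 : g₂ 0 = x₀ := by simp only [hg2_def, zero_mul]; exact hg0 (ns j)
      have hz1 : g₂ 1 = g (ns j) l := by simp only [hg2_def, one_mul]
      rw [hz0, hz1, hg0 k, hg1 k, dist_self, mul_zero, zero_add] at hconv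
      have hg2t : g₂ (t/r) = g (ns j) (t / s) := by
        simp only [hg2_def]
        congr 1
        rw [hl_def]
        field_simp
      rw [hg2t] at hconv
      calc dist (g k (t/r)) (g (ns j) (t/s)) ≤ (t/r) * dist (T^[k] x₀) (g (ns j) l) := hconv
        _ ≤ (t/r) * (r * Real.sqrt (2*(v/r) + (v/r)^2)) := by
            apply mul_le_mul_of_nonneg_left hev (by positivity)
        _ = t * Real.sqrt (2*(v/r)+(v/r)^2) := by
            rw [← mul_assoc, div_mul_cancel₀ t (ne_of_gt hrp)]
    -- clamped points along the geodesics
    set p : ℕ → ℝ → X := fun i t => g (ns i) (max 0 (min (t / bb (ns i)) 1)) with hp_def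
    have hp_eq : ∀ i (t : ℝ), 0 ≤ t → t ≤ bb (ns i) → p i t = g (ns i) (t / bb (ns i)) := by
      intro i t h0 h1
      simp only [hp_def]
      congr 1
      have h2 : t / bb (ns i) ≤ 1 := by rw [div_le_one (hrpos i)]; exact h1
      have h3 : 0 ≤ t / bb (ns i) := by positivity
      rw [min_eq_left h2, max_eq_right h3]
    have hp_neg : ∀ i (t : ℝ), t ≤ 0 → p i t = x₀ := by
      intro i t ht
      simp only [hp_def]
      have h1 : t / bb (ns i) ≤ 0 := div_nonpos_of_nonpos_of_nonneg ht (hrpos i).le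
      rw [min_eq_left (h1.trans zero_le_one), max_eq_left h1]
      exact hg0 (ns i)
    -- the deviation bound sequence
    set w : ℕ → ℝ := fun i => ((bb (ns i) - A * ns i) + ε i * ns i) / bb (ns i) with hw_def
    have hw0 : ∀ i, 0 ≤ w i := by
      intro i
      have h1 := hbn (ns i)
      have h2 : (0:ℝ) ≤ ε i * ns i := by positivity
      have h3 := (hrpos i).le
      simp only [hw_def]
      apply div_nonneg _ h3
      linarith
    have hns_top : Tendsto ns atTop atTop := hns_mono.tendsto_atTop
    have hnsR_top : Tendsto (fun i => ((ns i : ℕ) : ℝ)) atTop atTop :=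
      tendsto_natCast_atTop_atTop.comp hns_top
    have hAns_top : Tendsto (fun i => A * ((ns i : ℕ) : ℝ)) atTop atTop :=
      hnsR_top.const_mul_atTop hApos
    have hwlim : Tendsto w atTop (𝓝 0) := by
      have hupper : ∀ i, w i ≤ ((bb (ns i) / ns i - A) + ε i) / A := by
        intro i
        have hnpos : (0:ℝ) < (ns i : ℝ) := by exact_mod_cast hns_pos i
        have hnum : (bb (ns i) - A * ns i) + ε i * ns i
            = (ns i : ℝ) * ((bb (ns i) / ns i - A) + ε i) := by field_simp
        have hAn : A * ns i ≤ bb (ns i) := hbn (ns i)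
        have hnum0 : 0 ≤ (bb (ns i) - A * ns i) + ε i * ns i := by
          have : (0:ℝ) ≤ ε i * ns i := by positivity
          linarith
        simp only [hw_def]
        rw [div_le_div_iff₀ (hrpos i) hApos]
        have hAB : A ≤ bb (ns i) / ns i := by rw [le_div_iff₀ hnpos]; linarith
        have h5 : ((bb (ns i) - A * ns i) + ε i * ns i) * A
            ≤ ((bb (ns i) - A * ns i) + ε i * ns i) * (bb (ns i) / ns i) :=
          mul_le_mul_of_nonneg_left hAB hnum0
        calc ((bb (ns i) - A * ns i) + ε i * ns i) * A
            ≤ ((bb (ns i) - A * ns i) + ε i * ns i) * (bb (ns i) / ns i) := h5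
          _ = (ns i : ℝ) * ((bb (ns i) / ns i - A) + ε i) * (bb (ns i) / ns i) := by rw [← hnum]
          _ = (bb (ns i) / ns i - A + ε i) * bb (ns i) := by
              field_simp
      have hcomp : Tendsto (fun i => bb (ns i) / ((ns i : ℕ) : ℝ)) atTop (𝓝 A) :=
        hbblim.comp hns_top
      have hub : Tendsto (fun i => ((bb (ns i) / ns i - A) + ε i) / A) atTop
          (𝓝 (((A - A) + 0) / A)) := ((hcomp.sub_const A).add hεlim).div_const A
      have hub' : Tendsto (fun i => ((bb (ns i) / ns i - A) + ε i) / A) atTop (𝓝 0) := by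
        have h9 : ((A - A) + 0) / A = 0 := by simp
        rw [h9] at hub
        exact hub
      exact squeeze_zero hw0 hupper hub'
    -- Cauchyness and construction of the limit ray γ
    have key2 : ∀ i j : ℕ, i ≤ j → ∀ t : ℝ, 0 ≤ t → t ≤ bb (ns i) →
        dist (p i t) (p j t) ≤ t * Real.sqrt (2 * w i + w i ^ 2) := by
      intro i j hij t ht0 htr
      have htrj : t ≤ bb (ns j) := htr.trans (hbb_mono i j hij)
      rw [hp_eq i t ht0 htr, hp_eq j t ht0 htrj]
      have hkey := key (ns i) j (hns_mono.monotone hij) (hrpos i) (hbb_mono i j hij) t ht0 htr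
      refine hkey.trans ?_
      have hvle : vD (ns i) j / bb (ns i) ≤ w i := by
        have h1 : ε j ≤ ε i := hεanti i j hij
        have h2 : ε j * ns i ≤ ε i * ns i := by
          have : (0:ℝ) ≤ (ns i : ℝ) := by positivity
          nlinarith
        simp only [hvD_def, hw_def]
        gcongr <;> first | exact (hrpos i).le | linarith
      gcongr <;> first
        | exact hw0 i
        | exact div_nonneg (hvD0 _ _) (hrpos i).le
        | positivity
        | exact hvle
    have hconv2 : ∀ t : ℝ, ∃ y : X, Tendsto (fun i => p i t) atTop (𝓝 y) := by
      intro t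
      rcases le_or_gt t 0 with ht | ht
      · refine ⟨x₀, ?_⟩
        have : (fun i => p i t) = fun _ => x₀ := funext fun i => hp_neg i t ht
        rw [this]
        exact tendsto_const_nhds
      · apply cauchySeq_tendsto_of_complete
        rw [Metric.cauchySeq_iff']
        intro δ hδ
        have hev1 : ∀ᶠ i in atTop, t ≤ bb (ns i) := by
          filter_upwards [hAns_top.eventually_ge_atTop t] with i hi
          exact hi.trans (hbn (ns i))
        have hev2 : ∀ᶠ i in atTop, t * Real.sqrt (2 * w i + w i ^ 2) < δ := by
          have hts : Tendsto (fun i => t * Real.sqrt (2 * w i + w i ^ 2)) atTop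
              (𝓝 (t * Real.sqrt (2 * 0 + 0 ^ 2))) :=
            (((hwlim.const_mul 2).add (hwlim.pow 2)).sqrt).const_mul t
          have h0 : t * Real.sqrt (2 * 0 + 0 ^ 2) = 0 := by simp
          rw [h0] at hts
          exact hts.eventually_lt_const hδ
        obtain ⟨N, hN⟩ := eventually_atTop.1 (hev1.and hev2)
        refine ⟨N, fun n hn => ?_⟩
        obtain ⟨hN1, hN2⟩ := hN N le_rfl
        calc dist (p n t) (p N t) = dist (p N t) (p n t) := dist_comm _ _
          _ ≤ t * Real.sqrt (2 * w N + w N ^ 2) := key2 N n hn t ht.le hN1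
          _ < δ := hN2
    choose γ hγ using hconv2
    have hγ0 : γ 0 = x₀ := by
      have h1 : (fun i => p i 0) = fun _ => x₀ := funext fun i => hp_neg i 0 le_rfl
      have h2 := hγ 0
      rw [h1] at h2
      exact (tendsto_nhds_unique h2 tendsto_const_nhds)
    refine ⟨γ, hγ0, Or.inl ?_, ?_⟩
    · -- geodesic ray property
      intro s' t' hs' ht'
      have hev : ∀ᶠ i in atTop, dist (p i s') (p i t') = |s' - t'| := by
        have hev1 : ∀ᶠ i in atTop, max s' t' ≤ bb (ns i) := by
          filter_upwards [hAns_top.eventually_ge_atTop (max s' t')] with i hi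
          exact hi.trans (hbn (ns i))
        filter_upwards [hev1] with i hi
        have h1 : s' ≤ bb (ns i) := (le_max_left _ _).trans hi
        have h2 : t' ≤ bb (ns i) := (le_max_right _ _).trans hi
        rw [hp_eq i s' hs' h1, hp_eq i t' ht' h2]
        have h3 := hgI (ns i) (s' / bb (ns i)) (t' / bb (ns i)) (by positivity)
          (by rw [div_le_one (hrpos i)]; exact h1) (by positivity)
          (by rw [div_le_one (hrpos i)]; exact h2)
        rw [h3, div_sub_div_same, abs_div, abs_of_pos (hrpos i), div_mul_cancel₀]
        exact (hrpos i).ne'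
      have hlim1 : Tendsto (fun i => dist (p i s') (p i t')) atTop (𝓝 (dist (γ s') (γ t'))) :=
        (hγ s').dist (hγ t')
      have hlim2 : Tendsto (fun i => dist (p i s') (p i t')) atTop (𝓝 (|s' - t'|)) :=
        Tendsto.congr' (hev.mono fun i hi => hi.symm) tendsto_const_nhds
      exact tendsto_nhds_unique hlim1 hlim2
    · -- sublinear tracking
      have htrack : ∀ k : ℕ, 1 ≤ k →
          dist (T^[k] x₀) (γ (A * k)) ≤ (bb k - A * k)
            + A * k * Real.sqrt (2 * ((bb k - A * k)/bb k) + ((bb k - A * k)/bb k) ^ 2) := by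
        intro k hk
        have hkpos : (0:ℝ) < (k:ℝ) := by exact_mod_cast hk
        have hbkpos : 0 < bb k := lt_of_lt_of_le (mul_pos hApos hkpos) (hbn k)
        have htk : A * k ≤ bb k := hbn k
        have hAk0 : (0:ℝ) ≤ A * k := by positivity
        set c := bb k - A * k with hc_def
        have hc0 : 0 ≤ c := by simp only [hc_def]; linarith
        have hq : dist (T^[k] x₀) (g k (A * k / bb k)) = c := by
          have h1 := hgI k 1 (A * k / bb k) zero_le_one le_rfl (by positivity)
            (by rw [div_le_one hbkpos]; exact htk)
          rw [hg1 k] at h1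
          rw [h1]
          rw [abs_of_nonneg (by rw [le_sub_iff_add_le, zero_add, div_le_one hbkpos]; exact htk :
            (0:ℝ) ≤ 1 - A * k / bb k)]
          simp only [hc_def]
          rw [sub_mul, one_mul, div_mul_cancel₀ _ (ne_of_gt hbkpos)]
        have hev : ∀ᶠ j in atTop, k ≤ ns j ∧ bb k ≤ bb (ns j) := by
          have he1 : ∀ᶠ j in atTop, k ≤ ns j := hns_top.eventually_ge_atTop k
          have he2 : ∀ᶠ j in atTop, bb k ≤ bb (ns j) := by
            filter_upwards [hAns_top.eventually_ge_atTop (bb k)] with j hj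
            exact hj.trans (hbn (ns j))
          exact he1.and he2
        have hbound : ∀ᶠ j in atTop, dist (T^[k] x₀) (γ (A * k)) ≤
            c + A * k * Real.sqrt (2 * (vD k j / bb k) + (vD k j / bb k) ^ 2)
              + dist (p j (A * k)) (γ (A * k)) := by
          filter_upwards [hev] with j hj
          obtain ⟨hj1, hj2⟩ := hj
          have hkey := key k j hj1 hbkpos hj2 (A * k) hAk0 htk
          have hp_e : p j (A * k) = g (ns j) (A * k / bb (ns j)) :=
            hp_eq j _ hAk0 (htk.trans hj2)
          calc dist (T^[k] x₀) (γ (A * k))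
              ≤ dist (T^[k] x₀) (g k (A * k / bb k))
                + dist (g k (A * k / bb k)) (g (ns j) (A * k / bb (ns j)))
                + dist (g (ns j) (A * k / bb (ns j))) (γ (A * k)) := dist_triangle4 _ _ _ _
            _ ≤ c + A * k * Real.sqrt (2 * (vD k j / bb k) + (vD k j / bb k) ^ 2)
                + dist (p j (A * k)) (γ (A * k)) := by
                rw [hq, hp_e]
                gcongr <;> exact hkey
        have hvlim : Tendsto (fun j => vD k j) atTop (𝓝 c) := by
          have h1 : Tendsto (fun j => (bb k - A * k) + ε j * k) atTop (𝓝 ((bb k - A * k) + 0 * k)) :=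
            tendsto_const_nhds.add (hεlim.mul_const (k:ℝ))
          simp only [zero_mul, add_zero] at h1
          exact h1
        have hdlim : Tendsto (fun j => dist (p j (A * k)) (γ (A * k))) atTop (𝓝 0) :=
          tendsto_iff_dist_tendsto_zero.1 (hγ (A * k))
        have hRlim : Tendsto (fun j => c + A * k * Real.sqrt (2 * (vD k j / bb k)
            + (vD k j / bb k) ^ 2) + dist (p j (A * k)) (γ (A * k))) atTop
            (𝓝 (c + A * k * Real.sqrt (2 * (c / bb k) + (c / bb k) ^ 2) + 0)) := by
          apply Tendsto.add _ hdlim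
          apply Tendsto.add tendsto_const_nhds
          apply Tendsto.const_mul
          apply Tendsto.sqrt
          have h2 : Tendsto (fun j => vD k j / bb k) atTop (𝓝 (c / bb k)) :=
            hvlim.div_const _
          exact (h2.const_mul 2).add (h2.pow 2)
        have hfinal := ge_of_tendsto hRlim hbound
        rw [add_zero] at hfinal
        simp only [hc_def] at hfinal ⊢
        exact hfinal
      -- final squeeze
      set ζ : ℕ → ℝ := fun k => (bb k / k - A)
        + A * Real.sqrt (2 * ((bb k - A * k)/bb k) + ((bb k - A * k)/bb k) ^ 2) with hζ_def
      have hζlim : Tendsto ζ atTop (𝓝 0) := by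
        have hulim : Tendsto (fun k : ℕ => (bb k - A * k)/bb k) atTop (𝓝 0) := by
          apply squeeze_zero' (g := fun k : ℕ => (bb k / k - A) / A)
          · filter_upwards [eventually_ge_atTop 1] with k hk
            have hkpos : (0:ℝ) < (k:ℝ) := by exact_mod_cast hk
            have hbkpos : 0 < bb k := lt_of_lt_of_le (mul_pos hApos hkpos) (hbn k)
            have := hbn k
            apply div_nonneg _ hbkpos.le
            linarith
          · filter_upwards [eventually_ge_atTop 1] with k hk
            have hkpos : (0:ℝ) < (k:ℝ) := by exact_mod_cast hk
            have hbkpos : 0 < bb k := lt_of_lt_of_le (mul_pos hApos hkpos) (hbn k)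
            have hAk : A * k ≤ bb k := hbn k
            rw [div_le_div_iff₀ hbkpos hApos]
            have h1 : (bb k - A * k) * A * k ≤ (bb k - A * k) * bb k := by
              nlinarith
            have h2 : (bb k / k - A) * bb k * k = (bb k - A * k) * bb k := by
              field_simp [ne_of_gt hkpos, ne_of_gt hbkpos]
            nlinarith
          · have := (hbblim.sub_const A).div_const A
            simp only [sub_self, zero_div] at this
            exact this
        have hsq : Tendsto (fun k : ℕ => A * Real.sqrt (2 * ((bb k - A * k)/bb k)
            + ((bb k - A * k)/bb k) ^ 2)) atTop (𝓝 (A * Real.sqrt (2 * 0 + 0 ^ 2))) :=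
          (((hulim.const_mul 2).add (hulim.pow 2)).sqrt).const_mul A
        have h0 : A * Real.sqrt (2 * 0 + 0 ^ 2) = 0 := by simp
        rw [h0] at hsq
        have h1 := (hbblim.sub_const A).add hsq
        simp only [sub_self, zero_add] at h1
        exact h1
      refine squeeze_zero' ?_ ?_ hζlim
      · filter_upwards with n
        positivity
      · filter_upwards [eventually_ge_atTop 1] with n hn
        have hnpos : (0:ℝ) < (n:ℝ) := by exact_mod_cast hn
        have ht := htrack n hn
        have heq : ((bb n - A * n) + A * n * Real.sqrt (2 * ((bb n - A * n)/bb n)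
            + ((bb n - A * n)/bb n) ^ 2)) / n = ζ n := by
          simp only [hζ_def]
          field_simp
        rw [← heq]
        gcongr
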